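/- Let k be a field, let p₁,…,p_m be pairwise distinct points of kⁿ, let m_i ⊆ k[x₁,…,xₙ] be the ideal of all polynomials vanishing at p_i, and set M = m₁ ∩ ⋯ ∩ m_m. Let I be an ideal of k[x₁,…,xₙ] and let δ ≥ 1 be a natural number with M^δ ⊆ I. Let L₁,…,L_m ∈ k[x₁,…,xₙ] satisfy L_i(p_k) = 1 if i = k and L_i(p_k) = 0 if i ≠ k, and define e_i = 1 − (1 − L_i^δ)^δ. Then: (i) e₁ + ⋯ + e_m − 1 ∈ I; (ii) for all i, j, e_i·e_j − δ_{ij}·e_i ∈ I (where δ_{ij} = 1 if i = j and 0 otherwise); and (iii) e_i(p_k) = 1 if i = k and e_i(p_k) = 0 if i ≠ k. -/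
import Mathlib


open MvPolynomial

lemma prod_one_sub_eq_one_sub_sum {R : Type*} [CommRing R] {ι : Type*} [DecidableEq ι]
    (s : Finset ι) (a : ι → R)
    (h : ∀ i ∈ s, ∀ j ∈ s, i ≠ j → a i * a j = 0) :
    ∏ i ∈ s, (1 - a i) = 1 - ∑ i ∈ s, a i := by
  induction s using Finset.induction_on with
  | empty => simp
  | @insert b t hb ih =>
    rw [Finset.prod_insert hb, Finset.sum_insert hb,
      ih (fun i hi j hj hij => h i (Finset.mem_insert_of_mem hi) j (Finset.mem_insert_of_mem hj) hij)]
    have hz : a b * ∑ i ∈ t, a i = 0 := by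
      rw [Finset.mul_sum]
      exact Finset.sum_eq_zero fun i hi =>
        h b (Finset.mem_insert_self b t) i (Finset.mem_insert_of_mem hi)
          (fun hbi => hb (hbi ▸ hi))
    linear_combination hz

/-- **Partition-of-unity polynomials.**
Let `p 1, …, p m` be pairwise distinct points of `kⁿ`, `m_i` the vanishing ideal of
`p i`, and `M = m₁ ∩ ⋯ ∩ m_m`. Let `I` be an ideal and `δ ≥ 1` with `M^δ ⊆ I`.
If `L i (p k') = δ_{i k'}` and `e i = 1 − (1 − (L i)^δ)^δ`, then the `e i` form a
partition of unity modulo `I` and satisfy `e i (p k') = δ_{i k'}`. -/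
theorem partition_of_unity_polynomials
    {k : Type*} [Field k] {n m : ℕ}
    (p : Fin m → (Fin n → k)) (hp : Function.Injective p)
    (I : Ideal (MvPolynomial (Fin n) k)) (δ : ℕ) (hδ : 1 ≤ δ)
    (hM : (⨅ i, RingHom.ker (eval (p i))) ^ δ ≤ I)
    (L : Fin m → MvPolynomial (Fin n) k)
    (hL : ∀ i k', eval (p k') (L i) = if i = k' then 1 else 0)
    (e : Fin m → MvPolynomial (Fin n) k)
    (he : ∀ i, e i = 1 - (1 - L i ^ δ) ^ δ) :
    ((∑ i, e i) - 1 ∈ I) ∧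
    (∀ i j, e i * e j - (if i = j then e i else 0) ∈ I) ∧
    (∀ i k', eval (p k') (e i) = if i = k' then 1 else 0) := by
  have hδ0 : δ ≠ 0 := by omega
  -- any g vanishing at all points gives g^δ * h ∈ I
  have hmem : ∀ g h : MvPolynomial (Fin n) k, (∀ k', eval (p k') g = 0) → g ^ δ * h ∈ I := by
    intro g h hg
    refine hM (Ideal.mul_mem_right _ _ (Ideal.pow_mem_pow ?_ δ))
    simp only [Ideal.mem_iInf, RingHom.mem_ker]
    exact hg
  -- each e i is divisible by L i ^ δ
  have hdvd : ∀ i, ∃ h, e i = L i ^ δ * h := by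
    intro i
    have hd := sub_dvd_pow_sub_pow (1 : MvPolynomial (Fin n) k) (1 - L i ^ δ) δ
    simp only [one_pow, sub_sub_cancel] at hd
    obtain ⟨h, hh⟩ := hd
    exact ⟨h, by rw [he i, hh]⟩
  have part2 : ∀ i j, e i * e j - (if i = j then e i else 0) ∈ I := by
    intro i j
    obtain ⟨hi, hhi⟩ := hdvd i
    by_cases hij : i = j
    · subst hij
      rw [if_pos rfl]
      have key : e i * e i - e i = (L i * (1 - L i ^ δ)) ^ δ * (-hi) := by
        rw [mul_pow]
        linear_combination (e i - 1) * hhi + (L i ^ δ * hi) * (he i)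
      rw [key]
      refine hmem _ _ ?_
      intro k'
      rw [map_mul]
      by_cases hik : i = k'
      · subst hik
        simp [hL, one_pow]
      · simp [hL, hik]
    · obtain ⟨hj, hhj⟩ := hdvd j
      simp only [if_neg hij, sub_zero]
      have key : e i * e j = (L i * L j) ^ δ * (hi * hj) := by
        rw [mul_pow, hhi, hhj]; ring
      rw [key]
      refine hmem _ _ ?_
      intro k'
      rw [map_mul]
      by_cases hik : i = k'
      · subst hik
        simp [hL, Ne.symm hij]
      · simp [hL, hik]
  refine ⟨?_, part2, ?_⟩
  · -- part (i)
    have hprodI : (∏ i, (1 - L i ^ δ)) ^ δ * 1 ∈ I := by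
      refine hmem _ _ ?_
      intro k'
      rw [map_prod]
      refine Finset.prod_eq_zero (Finset.mem_univ k') ?_
      simp [hL, one_pow]
    rw [mul_one] at hprodI
    rw [← Ideal.Quotient.eq_zero_iff_mem, map_sub, map_sum, map_one]
    set Q := Ideal.Quotient.mk I with hQ
    have hzero : ∀ i j : Fin m, i ≠ j → Q (e i) * Q (e j) = 0 := by
      intro i j hij
      rw [← map_mul, Ideal.Quotient.eq_zero_iff_mem]
      have := part2 i j
      rw [if_neg hij, sub_zero] at this
      exact this
    have hps : ∏ i, (1 - Q (e i)) = 1 - ∑ i, Q (e i) :=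
      prod_one_sub_eq_one_sub_sum Finset.univ _ (fun i _ j _ hij => hzero i j hij)
    have hp0 : ∏ i, (1 - Q (e i)) = 0 := by
      have : ∏ i, (1 - Q (e i)) = Q ((∏ i, (1 - L i ^ δ)) ^ δ) := by
        rw [← Finset.prod_pow, map_prod]
        refine Finset.prod_congr rfl ?_
        intro i _
        rw [he i, map_sub, map_one]
        ring
      rw [this, Ideal.Quotient.eq_zero_iff_mem]
      exact hprodI
    rw [hp0] at hps
    linear_combination hps
  · -- part (iii)
    intro i k'
    rw [he i]
    by_cases hik : i = k'
    · subst hik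
      simp [hL, zero_pow hδ0]
    · simp [hL, hik, zero_pow hδ0]
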